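/- The polynomial L(X) = X^8 - X^3 over F_{2^4} has exactly 6 = 2^3 - 3 + 1 distinct roots in F_{2^4}, all elements of F_{2^4} (namely 0 and the fifth roots of unity), since 2^3 - 3 = 5 divides 2^4 - 1 = 15; and its quality parameter β = log_2(3)·4/9 ≈ 0.70 is strictly less than 3/4. -/
import Mathlib

open Polynomial

lemma aux_prim : ∃ ζ : GaloisField 2 4, IsPrimitiveRoot ζ 5 := by
  have hcard : Nat.card ((GaloisField 2 4)ˣ) = 15 := by
    rw [Nat.card_units, GaloisField.card 2 4 (by norm_num)]; norm_num
  obtain ⟨g, hg⟩ := IsCyclic.exists_generator (α := (GaloisField 2 4)ˣ)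
  have hog : orderOf g = 15 := by
    rw [orderOf_eq_card_of_forall_mem_zpowers hg]; exact hcard
  have h5 : orderOf (g ^ 3) = 5 := by
    rw [orderOf_pow, hog]; norm_num
  refine ⟨((g ^ 3 : (GaloisField 2 4)ˣ) : GaloisField 2 4), ?_⟩
  rw [IsPrimitiveRoot.coe_units_iff, ← h5]
  exact IsPrimitiveRoot.orderOf _

theorem stmt_18 :
    ({x : GaloisField 2 4 |
        Polynomial.eval x
          (Polynomial.X ^ 8 - Polynomial.X ^ 3 : Polynomial (GaloisField 2 4)) = 0}.ncard
        = 6) ∧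
      (2 ^ 3 - 3) ∣ (2 ^ 4 - 1) ∧
      Real.logb 2 3 * 4 / 3 ^ 2 < 3 / 4 := by
  refine ⟨?_, by norm_num, ?_⟩
  · classical
    obtain ⟨ζ, hζ⟩ := aux_prim
    have hset : {x : GaloisField 2 4 |
        Polynomial.eval x
          (Polynomial.X ^ 8 - Polynomial.X ^ 3 : Polynomial (GaloisField 2 4)) = 0}
        = ↑(insert (0 : GaloisField 2 4) (nthRoots 5 (1 : GaloisField 2 4)).toFinset) := by
      ext x
      simp only [Set.mem_setOf_eq, eval_sub, eval_pow, eval_X, Finset.coe_insert,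
        Set.mem_insert_iff, Finset.mem_coe, Multiset.mem_toFinset,
        mem_nthRoots (by norm_num : (0:ℕ) < 5)]
      constructor
      · intro h
        have h2 : x ^ 3 * (x ^ 5 - 1) = 0 := by linear_combination h
        rcases mul_eq_zero.mp h2 with h3 | h3
        · left; exact pow_eq_zero_iff (by norm_num) |>.mp h3
        · right; exact sub_eq_zero.mp h3
      · rintro (rfl | h)
        · simp
        · rw [show (8:ℕ) = 5 + 3 by norm_num, pow_add, h, one_mul, sub_self]
    rw [hset, Set.ncard_coe_finset, Finset.card_insert_of_notMem, 
      Multiset.toFinset_card_of_nodup (hζ.nthRoots_one_nodup), hζ.card_nthRoots_one]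
    simp only [Multiset.mem_toFinset, mem_nthRoots (by norm_num : (0:ℕ) < 5)]
    intro h
    simp at h
  · have h16 : Real.logb 2 3 * 16 < 27 := by
      have h1 : Real.logb 2 (3 ^ 16) < Real.logb 2 (2 ^ 27) :=
        Real.logb_lt_logb (by norm_num) (by norm_num) (by norm_num)
      rw [Real.logb_pow, Real.logb_pow, Real.logb_self_eq_one (by norm_num)] at h1
      push_cast at h1
      linarith
    nlinarith
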